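/- Let F ∈ C^k and G ∈ C^m be cochains on the rack space complex of an X-set Y, and let Λ = P(𝟏) ∈ C¹ be the cochain with Λ(y;x) = 1 for all y,x. Then Λ∪Λ = 0, and for F ∈ C^{n-1}(Y;X): the dual of ∂⁰ is F ↦ -F∪Λ and the dual of ∂¹ is F ↦ (-1)ⁿ Λ∪F. -/

import Mathlib

/-- Zero-face `δ⁰ᵢ` of the □-set `B(Y;X)` (0-based index, lists encoding cubes). -/
def face0 {Y X : Type*} (q : Y × List X) (i : ℕ) : Y × List X :=
  (q.1, q.2.eraseIdx i)

/-- One-face `δ¹ᵢ` of the □-set `B(Y;X)`. -/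
def face1 {Y X : Type*} (star : Y → X → Y) (act : X → X → X)
    (q : Y × List X) (i : ℕ) : Y × List X :=
  match q.2[i]? with
  | some b => (star q.1 b, (q.2.take i).map (fun a => act a b) ++ q.2.drop (i + 1))
  | none => q

/-- Iterated face `δ^ε_A`: the faces of `A` applied from the largest index down. -/
def multiFace {Y X : Type*} (f : Y × List X → ℕ → Y × List X)
    (S : Finset ℕ) (q : Y × List X) : Y × List X :=
  ((S.sort (· ≤ ·)).reverse).foldl f q

/-- `ε(A)`: the sign of the shuffle putting the complement `B` before `A`. -/
def shuffleSign (S T : Finset ℕ) : ℤ :=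
  (-1) ^ (((S ×ˢ T).filter fun p => p.1 < p.2).card)

/-- The cup product of `f ∈ C^k(Y;X)` and `g ∈ C^m(Y;X)`:
`(f∪g)(x) = (-1)^{km} Σ_A ε(A) f(δ⁰_A x) g(δ¹_B x)` over subsets `A` of size `m`. -/
def cup {Y X A : Type*} [CommRing A] (star : Y → X → Y) (act : X → X → X)
    (k m : ℕ) (f g : Y × List X → A) : Y × List X → A :=
  fun q => (-1 : A) ^ (k * m) *
    ∑ S ∈ Finset.powersetCard m (Finset.range (k + m)),
      (shuffleSign S (Finset.range (k + m) \ S) : A) *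
        (f (multiFace face0 S q) *
          g (multiFace (face1 star act) (Finset.range (k + m) \ S) q))

section Aux
variable {Y X : Type*} (star : Y → X → Y) (act : X → X → X)

lemma face0_len (q : Y × List X) (i : ℕ) (h : i < q.2.length) :
    (face0 q i).2.length = q.2.length - 1 := by
  simp [face0, List.length_eraseIdx_of_lt h]

lemma face1_len (q : Y × List X) (i : ℕ) (h : i < q.2.length) :
    (face1 star act q i).2.length = q.2.length - 1 := by
  unfold face1
  rw [List.getElem?_eq_getElem h]
  simp only [List.length_append, List.length_map, List.length_take, List.length_drop]
  omega

lemma fold_len (f : Y × List X → ℕ → Y × List X)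
    (hf : ∀ q i, i < q.2.length → (f q i).2.length = q.2.length - 1) :
    ∀ (l : List ℕ) (q : Y × List X), l.Pairwise (· > ·) →
      (∀ j ∈ l, j < q.2.length) → (l.foldl f q).2.length = q.2.length - l.length := by
  intro l
  induction l with
  | nil => simp
  | cons j t ih =>
    intro q hp hlt
    have hj : j < q.2.length := hlt j (by simp)
    have h1 : (f q j).2.length = q.2.length - 1 := hf q j hj
    have := ih (f q j) hp.of_cons (fun r hr => by
      have := (List.pairwise_cons.mp hp).1 r hr; omega)
    simp only [List.foldl_cons, List.length_cons]
    rw [this, h1]; omega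

lemma multiFace_len (f : Y × List X → ℕ → Y × List X)
    (hf : ∀ q i, i < q.2.length → (f q i).2.length = q.2.length - 1)
    (S : Finset ℕ) (q : Y × List X) (hS : ∀ j ∈ S, j < q.2.length) :
    (multiFace f S q).2.length = q.2.length - S.card := by
  unfold multiFace
  rw [fold_len f hf]
  · simp
  · exact List.pairwise_reverse.mpr ((Finset.sortedLT_sort S).pairwise)
  · intro j hj
    exact hS j (by simpa using hj)

lemma multiFace_singleton (f : Y × List X → ℕ → Y × List X) (i : ℕ) (q : Y × List X) :
    multiFace f {i} q = f q i := by
  simp [multiFace, Finset.sort_singleton]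

lemma shuffle1 (i n : ℕ) (hi : i < n) :
    shuffleSign {i} (Finset.range n \ {i}) = (-1) ^ (n - 1 - i) := by
  unfold shuffleSign
  congr 1
  have : (({i} ×ˢ (Finset.range n \ {i})).filter fun p => p.1 < p.2)
      = (Finset.Ico (i+1) n).image (fun j => (i, j)) := by
    ext ⟨a, b⟩
    simp only [Finset.mem_filter, Finset.mem_product, Finset.mem_singleton, Finset.mem_sdiff,
      Finset.mem_range, Finset.mem_image, Finset.mem_Ico, Prod.mk.injEq]
    constructor
    · rintro ⟨⟨rfl, hb, hbi⟩, hab⟩; exact ⟨b, ⟨hab, hb⟩, rfl, rfl⟩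
    · rintro ⟨j, ⟨h1, h2⟩, rfl, rfl⟩; exact ⟨⟨rfl, h2, by omega⟩, h1⟩
  rw [this, Finset.card_image_of_injective _ (fun a b h => by simpa using h)]
  simp; omega

lemma shuffle2 (i n : ℕ) (hi : i < n) :
    shuffleSign (Finset.range n \ {i}) {i} = (-1) ^ i := by
  unfold shuffleSign
  congr 1
  have : (((Finset.range n \ {i}) ×ˢ {i}).filter fun p => p.1 < p.2)
      = (Finset.range i).image (fun j => (j, i)) := by
    ext ⟨a, b⟩
    simp only [Finset.mem_filter, Finset.mem_product, Finset.mem_singleton, Finset.mem_sdiff,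
      Finset.mem_range, Finset.mem_image, Prod.mk.injEq]
    constructor
    · rintro ⟨⟨⟨ha, hai⟩, rfl⟩, hab⟩; exact ⟨a, hab, rfl, rfl⟩
    · rintro ⟨j, hj, rfl, rfl⟩; exact ⟨⟨⟨by omega, by omega⟩, rfl⟩, hj⟩
  rw [this, Finset.card_image_of_injective _ (fun a b h => by simpa using h)]
  simp

lemma powersetCard_pred (n : ℕ) (hn : 1 ≤ n) :
    Finset.powersetCard (n-1) (Finset.range n)
      = (Finset.range n).image (fun i => Finset.range n \ {i}) := by
  ext S
  simp only [Finset.mem_powersetCard, Finset.mem_image, Finset.mem_range]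
  constructor
  · rintro ⟨hsub, hcard⟩
    have h1 : (Finset.range n \ S).card = 1 := by
      rw [Finset.card_sdiff_of_subset hsub, Finset.card_range, hcard]; omega
    obtain ⟨i, hi⟩ := Finset.card_eq_one.mp h1
    have hin : i < n := by
      have : i ∈ Finset.range n \ S := hi ▸ Finset.mem_singleton_self i
      simpa using (Finset.mem_sdiff.mp this).1
    exact ⟨i, hin, by rw [← hi, Finset.sdiff_sdiff_eq_self hsub]⟩
  · rintro ⟨i, hi, rfl⟩
    refine ⟨Finset.sdiff_subset, ?_⟩
    rw [Finset.card_sdiff_of_subset (by simpa using hi), Finset.card_range]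
    simp

end Aux


/-- With `Λ = P(𝟏) ∈ C¹` (so `Λ(y;x) = 1`), one has `Λ∪Λ = 0`, and for
`F ∈ C^{n-1}(Y;X)`: `∂⁰F = -F∪Λ` and `∂¹F = (-1)ⁿ Λ∪F`. -/
theorem stmt_10 {Y X A : Type*} [CommRing A] (star : Y → X → Y) (act : X → X → X)
    (hbij : ∀ b : X, Function.Bijective fun a => act a b)
    (hdist : ∀ a b c : X, act (act a b) c = act (act a c) (act b c))
    (hstar_bij : ∀ b : X, Function.Bijective fun y : Y => star y b)
    (hstar : ∀ (y : Y) (b c : X), star (star y b) c = star (star y c) (act b c)) :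
    (∀ q : Y × List X, q.2.length = 2 →
      cup star act 1 1 (fun r : Y × List X => if r.2.length = 1 then (1 : A) else 0)
        (fun r : Y × List X => if r.2.length = 1 then (1 : A) else 0) q = 0) ∧
    (∀ n : ℕ, 1 ≤ n → ∀ F : Y × List X → A, ∀ q : Y × List X, q.2.length = n →
      (∑ i ∈ Finset.range n, (-1 : A) ^ (i + 1) * F (face0 q i)) =
          -(cup star act (n - 1) 1 F
              (fun r : Y × List X => if r.2.length = 1 then (1 : A) else 0) q) ∧
      (∑ i ∈ Finset.range n, (-1 : A) ^ (i + 1) * F (face1 star act q i)) =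
          (-1 : A) ^ n *
            cup star act 1 (n - 1)
              (fun r : Y × List X => if r.2.length = 1 then (1 : A) else 0) F q) := by
  constructor
  · -- Λ ∪ Λ = 0
    intro q hq
    unfold cup
    rw [show (1:ℕ)+1 = 2 from rfl, Finset.powersetCard_one, Finset.sum_map]
    simp only [Function.Embedding.coeFn_mk]
    rw [Finset.sum_congr rfl (g := fun i => (-1:A)^(1-i)) ?_]
    · rw [Finset.sum_range_succ, Finset.sum_range_one]; norm_num
    · intro i hi
      have hi2 : i < 2 := Finset.mem_range.mp hi
      have hl0 : (multiFace face0 {i} q).2.length = 1 := by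
        rw [multiFace_singleton, face0_len q i (by omega), hq]
      have hl1 : (multiFace (face1 star act) (Finset.range 2 \ {i}) q).2.length = 1 := by
        rw [multiFace_len _ (face1_len star act) _ _
          (fun j hj => by rw [hq]; exact Finset.mem_range.mp (Finset.mem_sdiff.mp hj).1),
          hq, Finset.card_sdiff_of_subset (by simpa using hi2), Finset.card_range, Finset.card_singleton]
      rw [if_pos hl0, if_pos hl1, shuffle1 i 2 hi2]
      push_cast
      norm_num
  · intro n hn F q hq
    have hn' : n - 1 + 1 = n := Nat.sub_add_cancel hn
    constructor
    · unfold cup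
      rw [hn', Finset.powersetCard_one, Finset.sum_map]
      simp only [Function.Embedding.coeFn_mk]
      rw [Finset.mul_sum, ← Finset.sum_neg_distrib]
      apply Finset.sum_congr rfl
      intro i hi
      have hin : i < n := Finset.mem_range.mp hi
      have hl1 : (multiFace (face1 star act) (Finset.range n \ {i}) q).2.length = 1 := by
        rw [multiFace_len _ (face1_len star act) _ _
          (fun j hj => by rw [hq]; exact Finset.mem_range.mp (Finset.mem_sdiff.mp hj).1),
          hq, Finset.card_sdiff_of_subset (by simpa using hin), Finset.card_range, Finset.card_singleton]
        omega
      rw [multiFace_singleton, if_pos hl1, shuffle1 i n hin]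
      push_cast
      have key : ((-1:A)) ^ ((n-1)*1) * (-1) ^ (n-1-i) = (-1) ^ i := by
        rw [← pow_add]
        rw [show (n-1)*1 + (n-1-i) = 2*(n-1-i)+i by omega, pow_add, pow_mul]
        simp
      linear_combination F (face0 q i) * key
    · unfold cup
      rw [show (1:ℕ)+(n-1) = n by omega, powersetCard_pred n hn,
        Finset.sum_image (fun i hi j hj h => by
          by_contra hne
          have h2 : i ∈ Finset.range n \ ({j} : Finset ℕ) := by
            simp only [Finset.mem_sdiff, Finset.mem_singleton]
            exact ⟨hi, hne⟩
          rw [← h] at h2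
          simp at h2)]
      rw [Finset.mul_sum, Finset.mul_sum]
      apply Finset.sum_congr rfl
      intro i hi
      have hin : i < n := Finset.mem_range.mp hi
      have hdd : Finset.range n \ (Finset.range n \ {i}) = {i} :=
        Finset.sdiff_sdiff_eq_self (by simpa using hin)
      have hl0 : (multiFace face0 (Finset.range n \ {i}) q).2.length = 1 := by
        rw [multiFace_len _ (fun r j h => face0_len r j h) _ _
          (fun j hj => by rw [hq]; exact Finset.mem_range.mp (Finset.mem_sdiff.mp hj).1),
          hq, Finset.card_sdiff_of_subset (by simpa using hin), Finset.card_range, Finset.card_singleton]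
        omega
      rw [hdd, multiFace_singleton, shuffle2 i n hin]
      simp only [hl0, reduceIte]
      push_cast
      have key : ((-1:A)) ^ n * (-1) ^ (1*(n-1)) = -1 := by
        rw [← pow_add, show n + 1*(n-1) = 2*(n-1)+1 by omega, pow_add, pow_mul]
        simp
      linear_combination (-((-1:A)^i * F (face1 star act q i))) * key
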